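/- Let P₁,...,P_M be orthogonal projection matrices, S(A) = (1/M)Σⱼ PⱼAPⱼ, P̄ = (1/M)Σⱼ Pⱼ with spectral norm λ := ‖P̄‖₂, and f_m = tr(S^m(I - P̄)). Then f_m ≤ λ^{m-1} f₁ for every m ≥ 1. -/

import Mathlib

open Matrix Finset
open scoped RealInnerProductSpace

section Aux

variable {d : ℕ}

private lemma psd_smul {A : Matrix (Fin d) (Fin d) ℝ} (hA : A.PosSemidef) {c : ℝ}
    (hc : 0 ≤ c) : (c • A).PosSemidef := by
  refine Matrix.PosSemidef.of_dotProduct_mulVec_nonneg ?_ fun x => ?_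
  · unfold Matrix.IsHermitian
    rw [conjTranspose_smul, hA.1]
    simp
  · rw [smul_mulVec, dotProduct_smul, smul_eq_mul]
    exact mul_nonneg hc (hA.dotProduct_mulVec_nonneg x)

private lemma psd_sum {ι : Type*} (s : Finset ι) (A : ι → Matrix (Fin d) (Fin d) ℝ)
    (hA : ∀ i ∈ s, (A i).PosSemidef) : (∑ i ∈ s, A i).PosSemidef := by
  classical
  induction s using Finset.induction_on with
  | empty => simpa using Matrix.PosSemidef.zero
  | insert _ _ h ih =>
    rw [Finset.sum_insert h]
    exact ((hA _ (Finset.mem_insert_self _ _)).add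
      (ih fun i hi => hA i (Finset.mem_insert_of_mem hi)))

private lemma psd_trace_nonneg {A : Matrix (Fin d) (Fin d) ℝ} (hA : A.PosSemidef) :
    0 ≤ A.trace := by
  rw [Matrix.trace]
  refine Finset.sum_nonneg fun i _ => ?_
  have := hA.dotProduct_mulVec_nonneg (Pi.single i 1)
  simpa [dotProduct, Matrix.mulVec_single, Pi.single_apply, Finset.sum_ite_eq',
    Matrix.diag] using this

open scoped MatrixOrder in
private lemma psd_eq_conjTranspose_mul_self {A : Matrix (Fin d) (Fin d) ℝ} (hA : A.PosSemidef) :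
    ∃ C : Matrix (Fin d) (Fin d) ℝ, A = Cᴴ * C := by
  refine ⟨CFC.sqrt A, ?_⟩
  rw [(CFC.sqrt_nonneg A).posSemidef.1.eq, CFC.sqrt_mul_sqrt_self A hA.nonneg]

private lemma psd_trace_mul_nonneg {A B : Matrix (Fin d) (Fin d) ℝ} (hA : A.PosSemidef)
    (hB : B.PosSemidef) : 0 ≤ (A * B).trace := by
  obtain ⟨C, rfl⟩ := psd_eq_conjTranspose_mul_self hA
  rw [Matrix.mul_assoc, Matrix.trace_mul_comm]
  exact psd_trace_nonneg (hB.mul_mul_conjTranspose_same C)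

private lemma dot_mulVec_le (B : Matrix (Fin d) (Fin d) ℝ) (x : Fin d → ℝ) :
    x ⬝ᵥ (B *ᵥ x) ≤ ‖Matrix.toEuclideanCLM (𝕜 := ℝ) B‖ * (x ⬝ᵥ x) := by
  set T := Matrix.toEuclideanCLM (𝕜 := ℝ) B with hT
  set y : EuclideanSpace ℝ (Fin d) := (WithLp.equiv 2 _).symm x with hy
  have h1 : ⟪y, T y⟫ = x ⬝ᵥ (B *ᵥ x) := by
    rw [hy, hT, WithLp.equiv_symm_apply, Matrix.toEuclideanCLM_toLp,
      EuclideanSpace.inner_toLp_toLp]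
    simp [dotProduct_comm]
  have h2 : ‖y‖ ^ 2 = x ⬝ᵥ x := by
    rw [← real_inner_self_eq_norm_sq, hy, WithLp.equiv_symm_apply, EuclideanSpace.inner_toLp_toLp]
    simp
  rw [← h1, ← h2]
  calc ⟪y, T y⟫ ≤ ‖y‖ * ‖T y‖ := real_inner_le_norm _ _
    _ ≤ ‖y‖ * (‖T‖ * ‖y‖) :=
        mul_le_mul_of_nonneg_left (T.le_opNorm y) (norm_nonneg y)
    _ = ‖T‖ * ‖y‖ ^ 2 := by ring

end Aux

/-- Exponential decay from spectral diffuseness: with `S(A) = (1/M) Σⱼ Pⱼ A Pⱼ`,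
`P̄ = (1/M) Σⱼ Pⱼ`, `λ = ‖P̄‖₂` the spectral (ℓ²-operator) norm of `P̄`, and
`f_m = tr(S^m(I - P̄))`, one has `f_m ≤ λ^{m-1} f₁` for every `m ≥ 1`. -/
theorem chain_exponential_decay {d M : ℕ} (P : Fin M → Matrix (Fin d) (Fin d) ℝ)
    (hPsym : ∀ j, (P j)ᵀ = P j) (hPidem : ∀ j, P j * P j = P j)
    (S : Matrix (Fin d) (Fin d) ℝ → Matrix (Fin d) (Fin d) ℝ)
    (hS : ∀ A, S A = (1 / (M : ℝ)) • ∑ j, P j * A * P j)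
    (Pbar : Matrix (Fin d) (Fin d) ℝ)
    (hPbar : Pbar = (1 / (M : ℝ)) • ∑ j, P j)
    (lam : ℝ) (hlam : lam = ‖Matrix.toEuclideanCLM (𝕜 := ℝ) Pbar‖)
    (f : ℕ → ℝ) (hf : ∀ m, f m = Matrix.trace (S^[m] (1 - Pbar)))
    (m : ℕ) (hm : 1 ≤ m) :
    f m ≤ lam ^ (m - 1) * f 1 := by
  have hMpos : 0 ≤ (1 / (M : ℝ)) := by positivity
  have hlam0 : 0 ≤ lam := hlam ▸ norm_nonneg _
  -- each P j is PSD
  have hPct : ∀ j, (P j)ᴴ = P j := fun j => by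
    rw [Matrix.conjTranspose_eq_transpose_of_trivial, hPsym]
  have hPpsd : ∀ j, (P j).PosSemidef := fun j => by
    have := Matrix.posSemidef_conjTranspose_mul_self (P j)
    rwa [hPct, hPidem] at this
  -- 1 - P j is PSD
  have hQpsd : ∀ j, ((1 : Matrix (Fin d) (Fin d) ℝ) - P j).PosSemidef := fun j => by
    have h1 : ((1 : Matrix (Fin d) (Fin d) ℝ) - P j)ᴴ = 1 - P j := by
      rw [Matrix.conjTranspose_sub, Matrix.conjTranspose_one, hPct]
    have h2 : ((1 : Matrix (Fin d) (Fin d) ℝ) - P j) * (1 - P j) = 1 - P j := by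
      rw [Matrix.sub_mul, Matrix.mul_sub, Matrix.mul_sub, one_mul, one_mul, mul_one, hPidem]
      abel
    have := Matrix.posSemidef_conjTranspose_mul_self
      ((1 : Matrix (Fin d) (Fin d) ℝ) - P j)
    rwa [h1, h2] at this
  -- 1 - Pbar is PSD
  have hIm : ((1 : Matrix (Fin d) (Fin d) ℝ) - Pbar).PosSemidef := by
    rcases Nat.eq_zero_or_pos M with hM | hM
    · have : Pbar = 0 := by
        subst hM
        simp [hPbar]
      rw [this, sub_zero]
      exact Matrix.PosSemidef.one
    · have key : (1 : Matrix (Fin d) (Fin d) ℝ) - Pbar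
          = (1 / (M : ℝ)) • ∑ j, ((1 : Matrix (Fin d) (Fin d) ℝ) - P j) := by
        rw [hPbar, Finset.sum_sub_distrib, smul_sub, Finset.sum_const, Finset.card_univ,
          Fintype.card_fin]
        have hM' : (M : ℝ) ≠ 0 := Nat.cast_ne_zero.mpr hM.ne'
        have : (M : ℕ) • (1 : Matrix (Fin d) (Fin d) ℝ) = (M : ℝ) • 1 := by
          rw [← Nat.cast_smul_eq_nsmul ℝ]
        rw [this, smul_smul]
        rw [one_div, inv_mul_cancel₀ hM', one_smul]
      rw [key]
      exact psd_smul (psd_sum _ _ fun j _ => hQpsd j) hMpos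
  -- S preserves PSD
  have hSpsd : ∀ A, A.PosSemidef → (S A).PosSemidef := fun A hA => by
    rw [hS]
    refine psd_smul (psd_sum _ _ fun j _ => ?_) hMpos
    have := hA.mul_mul_conjTranspose_same (P j)
    rwa [hPct] at this
  have hApsd : ∀ k, (S^[k] (1 - Pbar)).PosSemidef := by
    intro k
    induction k with
    | zero => simpa using hIm
    | succ k ih => rw [Function.iterate_succ_apply']; exact hSpsd _ ih
  -- trace of S A equals trace of Pbar * A
  have htrS : ∀ A : Matrix (Fin d) (Fin d) ℝ, (S A).trace = (Pbar * A).trace := by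
    intro A
    rw [hS, hPbar, Matrix.trace_smul, Matrix.smul_mul, Matrix.trace_smul,
      Matrix.trace_sum, Finset.sum_mul, Matrix.trace_sum]
    congr 1
    refine Finset.sum_congr rfl fun j _ => ?_
    rw [Matrix.trace_mul_cycle, hPidem]
  -- key trace inequality: tr(Pbar * A) ≤ lam * tr A for PSD A
  have hkey : ∀ A : Matrix (Fin d) (Fin d) ℝ, A.PosSemidef →
      (Pbar * A).trace ≤ lam * A.trace := by
    intro A hA
    have hPbarH : Pbarᴴ = Pbar := by
      rw [hPbar, Matrix.conjTranspose_smul, Matrix.conjTranspose_sum]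
      simp only [hPct]
      simp
    have hLpsd : (lam • (1 : Matrix (Fin d) (Fin d) ℝ) - Pbar).PosSemidef := by
      refine Matrix.PosSemidef.of_dotProduct_mulVec_nonneg ?_ fun x => ?_
      · unfold Matrix.IsHermitian
        rw [Matrix.conjTranspose_sub, Matrix.conjTranspose_smul, Matrix.conjTranspose_one,
          hPbarH]
        simp
      · have h := dot_mulVec_le Pbar x
        rw [← hlam] at h
        have hx : star x = x := by simp
        rw [hx, Matrix.sub_mulVec, Matrix.smul_mulVec, Matrix.one_mulVec,
          dotProduct_sub, dotProduct_smul, smul_eq_mul]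
        linarith
    have h0 := psd_trace_mul_nonneg hLpsd hA
    rw [Matrix.sub_mul, Matrix.trace_sub, Matrix.smul_mul, Matrix.trace_smul, one_mul,
      smul_eq_mul] at h0
    linarith
  -- step inequality
  have hstep : ∀ k, f (k + 1) ≤ lam * f k := by
    intro k
    rw [hf, hf, Function.iterate_succ_apply', htrS]
    exact hkey _ (hApsd k)
  -- induction
  obtain ⟨n, rfl⟩ := Nat.exists_eq_add_of_le hm
  clear hm
  induction n with
  | zero => simp
  | succ n ih =>
    have h1 : 1 + (n + 1) = (1 + n) + 1 := by ring
    rw [h1]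
    calc f ((1 + n) + 1) ≤ lam * f (1 + n) := hstep _
      _ ≤ lam * (lam ^ (1 + n - 1) * f 1) := mul_le_mul_of_nonneg_left ih hlam0
      _ = lam ^ ((1 + n) + 1 - 1) * f 1 := by
          simp only [Nat.add_sub_cancel, Nat.add_sub_cancel_left]
          rw [pow_add, pow_one]
          ring
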